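/- There is no ℝ-linear operator D on C²((0,∞)) satisfying the Leibniz rule such that D(x^β) = (Γ(β+1)/Γ(β+1−α))·x^(β−α) for all β ∈ {1, 2} and some non-integer α ∈ (0,1). -/
import Mathlib


open Set Real

theorem fractional_power_rule_incompatible_with_leibniz
    (α : ℝ) (hα : α ∈ Ioo (0:ℝ) 1) :
    ¬ ∃ D : (ℝ → ℝ) → (ℝ → ℝ),
      (∀ (c₁ c₂ : ℝ) (f g : ℝ → ℝ),
        ContDiffOn ℝ 2 f (Ioi (0:ℝ)) → ContDiffOn ℝ 2 g (Ioi (0:ℝ)) →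
        D (fun x => c₁ * f x + c₂ * g x) = fun x => c₁ * D f x + c₂ * D g x) ∧
      (∀ f g : ℝ → ℝ, ContDiffOn ℝ 2 f (Ioi (0:ℝ)) → ContDiffOn ℝ 2 g (Ioi (0:ℝ)) →
        D (fun x => f x * g x) = fun x => D f x * g x + f x * D g x) ∧
      (∀ β ∈ ({1, 2} : Set ℝ), ∀ x : ℝ, 0 < x →
        D (fun t => t ^ β) x =
          (Real.Gamma (β + 1) / Real.Gamma (β + 1 - α)) * x ^ (β - α)) := by
  rintro ⟨D, -, hLeib, hpow⟩
  obtain ⟨hα0, hα1⟩ := hα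
  have hf : ContDiffOn ℝ 2 (fun t : ℝ => t ^ (1:ℝ)) (Ioi 0) := by
    simp only [Real.rpow_one]
    exact contDiffOn_id
  have hfun : (fun t : ℝ => t ^ (2:ℝ)) = fun t => t ^ (1:ℝ) * t ^ (1:ℝ) := by
    funext t
    rw [Real.rpow_one, show (2:ℝ) = ((2:ℕ):ℝ) by norm_num, Real.rpow_natCast]
    ring
  have hL := hLeib _ _ hf hf
  have h2 := hpow 2 (by simp) 1 one_pos
  have h1 := hpow 1 (by simp) 1 one_pos
  rw [hfun] at h2
  have hEq : Real.Gamma (2 + 1) / Real.Gamma (2 + 1 - α) =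
      2 * (Real.Gamma (1 + 1) / Real.Gamma (1 + 1 - α)) := by
    have := congrFun hL 1
    rw [h2] at this
    rw [h1, Real.one_rpow, Real.one_rpow, mul_one, mul_one] at this
    linarith [this]
  have hg2 : (0:ℝ) < 2 - α := by linarith
  have hgpos : 0 < Real.Gamma (2 - α) := Real.Gamma_pos_of_pos hg2
  have hrec : Real.Gamma (2 + 1 - α) = (2 - α) * Real.Gamma (2 - α) := by
    rw [show (2 + 1 - α : ℝ) = (2 - α) + 1 by ring]
    exact Real.Gamma_add_one (ne_of_gt hg2)
  have hΓ3 : Real.Gamma (2 + 1) = 2 := by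
    rw [show (2 + 1 : ℝ) = ((2:ℕ):ℝ) + 1 by norm_num, Real.Gamma_nat_eq_factorial]
    norm_num
  have hΓ2 : Real.Gamma (1 + 1) = 1 := by
    rw [show (1 + 1 : ℝ) = ((1:ℕ):ℝ) + 1 by norm_num, Real.Gamma_nat_eq_factorial]
    norm_num
  have h12 : Real.Gamma (1 + 1 - α) = Real.Gamma (2 - α) := by norm_num
  rw [hrec, hΓ3, hΓ2, h12] at hEq
  have hne : (2 - α) * Real.Gamma (2 - α) ≠ 0 := by positivity
  field_simp at hEq
  nlinarith [hgpos]
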